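/- Let 0<q<1. Then for every complex z with |z| < 1/q one has the product formula Σ_{k≥0} a_k z^k = ∏_{j=0}^∞ ((1−q^{2j+2}z)/(1−q^{2j+1}z))^2, where the infinite product converges. -/

import Mathlib

open Filter Finset

/-- auxiliary growth function -/
noncomputable def Rb (q : ℝ) : ℕ → ℝ
  | 0 => 1
  | k+1 => Rb q k * (1 + q ^ (2*(k+1)) * (k+2))

lemma Rb_one_le {q : ℝ} (hq0 : 0 < q) : ∀ k, 1 ≤ Rb q k := by
  intro k
  induction k with
  | zero => simp [Rb]
  | succ k ih =>
    have h : (0:ℝ) ≤ q ^ (2*(k+1)) * (k+2) := by positivity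
    calc (1:ℝ) ≤ Rb q k * 1 := by linarith
    _ ≤ Rb q k * (1 + q ^ (2*(k+1)) * (k+2)) := by
        apply mul_le_mul_of_nonneg_left (by linarith) (by linarith)
    _ = Rb q (k+1) := rfl

lemma Rb_bound {q : ℝ} (hq0 : 0 < q) (hq1 : q < 1) : ∃ C : ℝ, 0 < C ∧ ∀ k, Rb q k ≤ C := by
  set t : ℕ → ℝ := fun j => q ^ (2*(j+1)) * (j+2) with ht
  have htnn : ∀ j, 0 ≤ t j := fun j => by positivity
  have hq2 : q^2 < 1 := by nlinarith
  have hsum : Summable t := by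
    have h1 : Summable (fun j : ℕ => (j:ℝ) * (q^2) ^ j) := by
      simpa using summable_pow_mul_geometric_of_norm_lt_one 1 (r := q^2)
        (by rw [Real.norm_eq_abs, abs_of_pos (by positivity)]; exact hq2)
    have h2 : Summable (fun j : ℕ => (2:ℝ) * (q^2) ^ j) :=
      (summable_geometric_of_lt_one (by positivity) hq2).mul_left 2
    have h3 : Summable (fun j : ℕ => ((j:ℝ) + 2) * (q^2) ^ j) := by
      have := h1.add h2
      apply this.congr
      intro j; ring
    have := h3.mul_left (q^2)
    apply this.congr
    intro j
    simp only [ht]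
    rw [pow_mul]
    ring
  refine ⟨Real.exp (∑' j, t j), Real.exp_pos _, ?_⟩
  intro k
  calc Rb q k ≤ Real.exp (∑ j ∈ range k, t j) := by
        induction k with
        | zero => simp [Rb]
        | succ k ih =>
          have h1 : 1 + t k ≤ Real.exp (t k) := by
            have := Real.add_one_le_exp (t k); linarith
          have h0 : (0:ℝ) ≤ Rb q k := le_trans zero_le_one (Rb_one_le hq0 k)
          calc Rb q (k+1) = Rb q k * (1 + t k) := rfl
          _ ≤ Real.exp (∑ j ∈ range k, t j) * Real.exp (t k) := by
              apply mul_le_mul ih h1 (by positivity) (le_of_lt (Real.exp_pos _))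
          _ = Real.exp (∑ j ∈ range (k+1), t j) := by
              rw [← Real.exp_add, sum_range_succ]
  _ ≤ Real.exp (∑' j, t j) := by
      apply Real.exp_le_exp.mpr
      exact hsum.sum_le_tsum (range k) (fun i _ => htnn i)

lemma coeff_bound (q : ℝ) (hq0 : 0 < q) (hq1 : q < 1) (a : ℕ → ℝ)
    (ha0 : a 0 = 1)
    (ha1 : 2 * (1 - q) * a 0 = q⁻¹ * (1 - q ^ 2) * a 1)
    (ha : ∀ k : ℕ, 1 ≤ k →
      2 * (1 - q ^ (2 * k + 1)) * a k
        = q⁻¹ * (1 - q ^ (2 * k + 2)) * a (k + 1) + q * (1 - q ^ (2 * k)) * a (k - 1)) :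
    ∃ C : ℝ, 0 < C ∧ ∀ k : ℕ, |a k| ≤ C * (k + 1) * q ^ k := by
  have hq' : q ≠ 0 := hq0.ne'
  -- inverse-free recurrence
  have key : ∀ k : ℕ, 1 ≤ k → 2*q*(1 - q^(2*k+1)) * a k
      = (1 - q^(2*k+2)) * a (k+1) + q^2*(1 - q^(2*k)) * a (k-1) := by
    intro k hk
    have h := ha k hk
    field_simp at h
    linear_combination h
  have key0 : 2*q*(1 - q) = (1 - q^2) * a 1 := by
    have h := ha1
    rw [ha0] at h
    field_simp at h
    linear_combination h
  obtain ⟨b, ha_eq⟩ : ∃ b : ℕ → ℝ, ∀ k, a k = q ^ k * b k :=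
    ⟨fun k => a k / q ^ k, fun k => by field_simp⟩
  have hb0 : b 0 = 1 := by
    have := ha_eq 0; rw [ha0] at this; simpa using this.symm
  have hmq : (1:ℝ) - q ≠ 0 := ne_of_gt (by linarith)
  have h1q : (1:ℝ) + q ≠ 0 := by positivity
  have hb1 : b 1 = 2 / (1 + q) := by
    have hk0 := key0
    rw [ha_eq 1] at hk0
    rw [eq_div_iff h1q]
    apply mul_left_cancel₀ hmq
    apply mul_left_cancel₀ hq'
    linear_combination -hk0
  -- b recurrence
  have hbrec : ∀ m : ℕ, (1 - q^(2*(m+1)+2)) * b (m+2)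
      = 2*(1 - q^(2*(m+1)+1)) * b (m+1) - (1 - q^(2*(m+1))) * b m := by
    intro m
    have hk := key (m+1) (by omega)
    simp only [Nat.add_sub_cancel] at hk
    rw [ha_eq (m+1+1), ha_eq (m+1), ha_eq m] at hk
    apply mul_left_cancel₀ (pow_ne_zero (m+2) hq')
    linear_combination -hk
  -- difference recurrence
  have hdrec : ∀ m : ℕ, (1 - q^(2*(m+1)+2)) * (b (m+2) - b (m+1))
      = (1 - q^(2*(m+1))) * (b (m+1) - b m) + q^(2*(m+1)) * (1-q)^2 * b (m+1) := by
    intro m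
    linear_combination hbrec m
  -- inequality for differences
  have hu : ∀ m : ℕ, |b (m+2) - b (m+1)| ≤ |b (m+1) - b m| + q^(2*(m+1)) * |b (m+1)| := by
    intro m
    have hP : 0 < 1 - q^(2*(m+1)+2) := by
      have := pow_lt_one₀ hq0.le hq1 (n := 2*(m+1)+2) (by omega)
      linarith
    have hP1 : 0 < 1 - q^(2*(m+1)) := by
      have := pow_lt_one₀ hq0.le hq1 (n := 2*(m+1)) (by omega)
      linarith
    have hle1 : q^(2*(m+1)+2) ≤ q^(2*(m+1)) :=
      pow_le_pow_of_le_one hq0.le hq1.le (by omega)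
    have hle2 : (1-q)^2 ≤ 1 - q^(2*(m+1)+2) := by
      have hq2 : q^(2*(m+1)+2) ≤ q^2 := pow_le_pow_of_le_one hq0.le hq1.le (by omega)
      nlinarith
    have h1 : (1 - q^(2*(m+1)+2)) * |b (m+2) - b (m+1)|
        ≤ (1 - q^(2*(m+1)+2)) * (|b (m+1) - b m| + q^(2*(m+1)) * |b (m+1)|) := by
      have e1 : (1 - q^(2*(m+1)+2)) * |b (m+2) - b (m+1)|
          = |(1 - q^(2*(m+1)+2)) * (b (m+2) - b (m+1))| := by
        rw [abs_mul, abs_of_pos hP]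
      rw [e1, hdrec m]
      refine le_trans (abs_add_le _ _) ?_
      rw [abs_mul, abs_mul, abs_of_pos hP1, abs_of_nonneg (by positivity : (0:ℝ) ≤ q^(2*(m+1)) * (1-q)^2)]
      have t1 : (1 - q^(2*(m+1))) * |b (m+1) - b m| ≤ (1 - q^(2*(m+1)+2)) * |b (m+1) - b m| := by
        apply mul_le_mul_of_nonneg_right (by linarith) (abs_nonneg _)
      have t2 : q^(2*(m+1)) * (1-q)^2 * |b (m+1)| ≤ (1 - q^(2*(m+1)+2)) * (q^(2*(m+1)) * |b (m+1)|) := by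
        have hqp : (0:ℝ) ≤ q^(2*(m+1)) := by positivity
        have := mul_le_mul_of_nonneg_right hle2 (mul_nonneg hqp (abs_nonneg (b (m+1))))
        nlinarith [abs_nonneg (b (m+1))]
      calc (1 - q^(2*(m+1))) * |b (m+1) - b m| + q^(2*(m+1)) * (1-q)^2 * |b (m+1)|
          ≤ (1 - q^(2*(m+1)+2)) * |b (m+1) - b m| + (1 - q^(2*(m+1)+2)) * (q^(2*(m+1)) * |b (m+1)|) := by
            linarith
        _ = (1 - q^(2*(m+1)+2)) * (|b (m+1) - b m| + q^(2*(m+1)) * |b (m+1)|) := by ring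
    exact le_of_mul_le_mul_left h1 hP
  -- the simultaneous induction
  have hbd : ∀ k : ℕ, |b (k+1) - b k| ≤ Rb q k ∧ |b k| ≤ Rb q k * (k+1) := by
    intro k
    induction k with
    | zero =>
      constructor
      · rw [hb0, hb1]
        have h1q : (0:ℝ) < 1 + q := by positivity
        rw [abs_le]
        constructor
        · have : (0:ℝ) ≤ 2 / (1+q) := by positivity
          simp [Rb]; linarith
        · have : 2 / (1+q) ≤ 2 := by
            rw [div_le_iff₀ h1q]; linarith
          simp [Rb]; linarith
      · rw [hb0]; simp [Rb]
    | succ k ih =>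
      have hRk : (0:ℝ) < Rb q k := lt_of_lt_of_le zero_lt_one (Rb_one_le hq0 k)
      have hRmono : Rb q k ≤ Rb q (k+1) := by
        have h : (0:ℝ) ≤ q ^ (2*(k+1)) * (k+2) := by positivity
        calc Rb q k = Rb q k * 1 := by ring
        _ ≤ Rb q k * (1 + q ^ (2*(k+1)) * (k+2)) := by
            apply mul_le_mul_of_nonneg_left (by linarith) hRk.le
        _ = Rb q (k+1) := rfl
      have hv' : |b (k+1)| ≤ Rb q k * (k+2) := by
        have htri : |b (k+1)| ≤ |b k| + |b (k+1) - b k| := by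
          have := abs_add_le (b k) (b (k+1) - b k)
          simpa using this
        have := ih.1
        have := ih.2
        push_cast
        push_cast at this
        linarith
      constructor
      · refine le_trans (hu k) ?_
        have hq2k : (0:ℝ) ≤ q^(2*(k+1)) := by positivity
        have h2 : q^(2*(k+1)) * |b (k+1)| ≤ q^(2*(k+1)) * (Rb q k * (k+2)) :=
          mul_le_mul_of_nonneg_left hv' hq2k
        have hstep : Rb q (k+1) = Rb q k + q^(2*(k+1)) * (k+2) * Rb q k := by
          show Rb q k * (1 + q ^ (2*(k+1)) * (k+2)) = _
          ring
        rw [hstep]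
        have := ih.1
        push_cast
        push_cast at h2
        nlinarith
      · have h3 : |b (k+1)| ≤ Rb q (k+1) * ((k:ℝ)+2) :=
          le_trans hv' (mul_le_mul_of_nonneg_right hRmono (by positivity))
        push_cast
        push_cast at h3
        nlinarith [hRk]
  obtain ⟨C, hCpos, hC⟩ := Rb_bound hq0 hq1
  refine ⟨C, hCpos, ?_⟩
  intro k
  rw [ha_eq k, abs_mul, abs_of_pos (by positivity : (0:ℝ) < q ^ k)]
  have h1 : |b k| ≤ C * (k+1) := le_trans (hbd k).2
    (mul_le_mul_of_nonneg_right (hC k) (by positivity))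
  calc q^k * |b k| ≤ q^k * (C * (k+1)) := mul_le_mul_of_nonneg_left h1 (by positivity)
  _ = C * (k+1) * q^k := by ring
lemma summable_aux (C r : ℝ) (h0 : 0 ≤ r) (h1 : r < 1) :
    Summable (fun k : ℕ => C * ((k:ℝ) + 1) * r ^ k) := by
  have h1' : Summable (fun j : ℕ => (j:ℝ) * r ^ j) := by
    simpa using summable_pow_mul_geometric_of_norm_lt_one 1 (r := r)
      (by rwa [Real.norm_eq_abs, abs_of_nonneg h0])
  have h2 : Summable (fun j : ℕ => r ^ j) := summable_geometric_of_lt_one h0 h1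
  exact ((h1'.add h2).mul_left C).congr (fun j => by ring)

lemma summable_aux2 (C r : ℝ) (h0 : 0 ≤ r) (h1 : r < 1) :
    Summable (fun k : ℕ => C * ((k:ℝ) + 2) * r ^ k) := by
  have h1' : Summable (fun j : ℕ => (j:ℝ) * r ^ j) := by
    simpa using summable_pow_mul_geometric_of_norm_lt_one 1 (r := r)
      (by rwa [Real.norm_eq_abs, abs_of_nonneg h0])
  have h2 : Summable (fun j : ℕ => (2:ℝ) * r ^ j) :=
    (summable_geometric_of_lt_one h0 h1).mul_left 2
  exact ((h1'.add h2).mul_left C).congr (fun j => by ring)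


/-- Let `0 < q < 1` and let `(a k)` satisfy the recurrence of the context.
Then for every complex `z` with `‖z‖ < 1/q` one has the product formula
`Σ_{k≥0} a_k z^k = ∏_{j=0}^∞ ((1 - q^{2j+2}z)/(1 - q^{2j+1}z))²`, where the infinite
product converges (is multipliable). -/
theorem stmt5 (q : ℝ) (hq0 : 0 < q) (hq1 : q < 1) (a : ℕ → ℝ)
    (ha0 : a 0 = 1)
    (ha1 : 2 * (1 - q) * a 0 = q⁻¹ * (1 - q ^ 2) * a 1)
    (ha : ∀ k : ℕ, 1 ≤ k →
      2 * (1 - q ^ (2 * k + 1)) * a k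
        = q⁻¹ * (1 - q ^ (2 * k + 2)) * a (k + 1) + q * (1 - q ^ (2 * k)) * a (k - 1)) :
    ∀ z : ℂ, ‖z‖ < 1 / q →
      Multipliable (fun j : ℕ =>
        ((1 - (q : ℂ) ^ (2 * j + 2) * z) / (1 - (q : ℂ) ^ (2 * j + 1) * z)) ^ 2) ∧
      ∑' k : ℕ, (a k : ℂ) * z ^ k
        = ∏' j : ℕ, ((1 - (q : ℂ) ^ (2 * j + 2) * z) / (1 - (q : ℂ) ^ (2 * j + 1) * z)) ^ 2 := by
  have hq' : q ≠ 0 := hq0.ne'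
  have hq2 : q ^ 2 < 1 := by nlinarith
  have hnq : ‖(q:ℂ)‖ = q := by
    rw [Complex.norm_real, Real.norm_eq_abs, abs_of_pos hq0]
  obtain ⟨C, hC0, hC⟩ := coeff_bound q hq0 hq1 a ha0 ha1 ha
  -- inverse-free recurrences
  have key : ∀ k : ℕ, 1 ≤ k → 2*q*(1 - q^(2*k+1)) * a k
      = (1 - q^(2*k+2)) * a (k+1) + q^2*(1 - q^(2*k)) * a (k-1) := by
    intro k hk
    have h := ha k hk
    field_simp at h
    linear_combination h
  have key0 : 2*q*(1 - q) = (1 - q^2) * a 1 := by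
    have h := ha1
    rw [ha0] at h
    field_simp at h
    linear_combination h
  -- summability of the power series
  have hnormsum : ∀ u : ℂ, ‖u‖ < 1/q → Summable (fun k : ℕ => ‖(a k : ℂ) * u ^ k‖) := by
    intro u hu
    have hr : q * ‖u‖ < 1 := by
      rw [lt_div_iff₀ hq0] at hu
      linarith [hu]
    have hr0 : (0:ℝ) ≤ q * ‖u‖ := by positivity
    apply Summable.of_nonneg_of_le (fun k => norm_nonneg _) ?_ (summable_aux C (q*‖u‖) hr0 hr)
    intro k
    rw [norm_mul, Complex.norm_real, Real.norm_eq_abs, norm_pow]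
    calc |a k| * ‖u‖ ^ k ≤ (C * ((k:ℝ)+1) * q ^ k) * ‖u‖ ^ k :=
          mul_le_mul_of_nonneg_right (hC k) (by positivity)
      _ = C * ((k:ℝ)+1) * (q*‖u‖) ^ k := by rw [mul_pow]; ring
  have hsum : ∀ u : ℂ, ‖u‖ < 1/q → Summable (fun k : ℕ => (a k : ℂ) * u ^ k) :=
    fun u hu => (hnormsum u hu).of_norm
  obtain ⟨F, hFdef⟩ : ∃ F : ℂ → ℂ, ∀ u, F u = ∑' k : ℕ, (a k : ℂ) * u ^ k :=
    ⟨_, fun u => rfl⟩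
  -- the q-difference equation
  have heqgen : ∀ u : ℂ, ‖u‖ < 1/q →
      F u * (1 - (q:ℂ)*u)^2 = F ((q:ℂ)^2*u) * (1 - (q:ℂ)^2*u)^2 := by
    intro u hu
    have hu2 : ‖(q:ℂ)^2*u‖ < 1/q := by
      rw [norm_mul, norm_pow, hnq]
      calc q^2 * ‖u‖ ≤ 1 * ‖u‖ :=
            mul_le_mul_of_nonneg_right (by nlinarith) (norm_nonneg u)
        _ = ‖u‖ := one_mul _
        _ < 1/q := hu
    have S1 := hsum u hu
    have S2 := hsum _ hu2
    have h0u : ((a 0 : ℝ):ℂ) * u ^ 0 = 1 := by rw [ha0]; simp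
    have h0w : ((a 0 : ℝ):ℂ) * ((q:ℂ)^2*u) ^ 0 = 1 := by rw [ha0]; simp
    -- A series
    have hAfun : (fun k : ℕ => 2*(q:ℂ)*(1-(q:ℂ)^(2*k+1))*((a k : ℝ):ℂ)*u^(k+1))
        = fun k : ℕ => (2*(q:ℂ)*u) * (((a k : ℝ):ℂ) * u^k)
          - (2*(q:ℂ)^2*u) * (((a k : ℝ):ℂ) * ((q:ℂ)^2*u)^k) := by
      funext k; ring
    have SA : Summable (fun k : ℕ => 2*(q:ℂ)*(1-(q:ℂ)^(2*k+1))*((a k : ℝ):ℂ)*u^(k+1)) := by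
      rw [hAfun]; exact (S1.mul_left _).sub (S2.mul_left _)
    have TA : ∑' k : ℕ, 2*(q:ℂ)*(1-(q:ℂ)^(2*k+1))*((a k : ℝ):ℂ)*u^(k+1)
        = 2*(q:ℂ)*u * F u - 2*(q:ℂ)^2*u * F ((q:ℂ)^2*u) := by
      rw [hAfun, (S1.mul_left _).tsum_sub (S2.mul_left _), tsum_mul_left, tsum_mul_left,
        hFdef u, hFdef ((q:ℂ)^2*u)]
    -- B series
    have hBfun : (fun k : ℕ => (1-(q:ℂ)^(2*k+2))*((a (k+1) : ℝ):ℂ)*u^(k+1))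
        = fun k : ℕ => (((a (k+1) : ℝ):ℂ) * u^(k+1))
          - (((a (k+1) : ℝ):ℂ) * ((q:ℂ)^2*u)^(k+1)) := by
      funext k; ring
    have SB1 : Summable (fun k : ℕ => ((a (k+1) : ℝ):ℂ) * u^(k+1)) :=
      (summable_nat_add_iff (f := fun k : ℕ => ((a k : ℝ):ℂ) * u^k) 1).2 S1
    have SB2 : Summable (fun k : ℕ => ((a (k+1) : ℝ):ℂ) * ((q:ℂ)^2*u)^(k+1)) :=
      (summable_nat_add_iff (f := fun k : ℕ => ((a k : ℝ):ℂ) * ((q:ℂ)^2*u)^k) 1).2 S2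
    have SB : Summable (fun k : ℕ => (1-(q:ℂ)^(2*k+2))*((a (k+1) : ℝ):ℂ)*u^(k+1)) := by
      rw [hBfun]
      exact SB1.sub SB2
    have TB : ∑' k : ℕ, (1-(q:ℂ)^(2*k+2))*((a (k+1) : ℝ):ℂ)*u^(k+1)
        = (F u - 1) - (F ((q:ℂ)^2*u) - 1) := by
      rw [hBfun, SB1.tsum_sub SB2]
      have e1 : ∑' k : ℕ, ((a (k+1) : ℝ):ℂ) * u^(k+1) = F u - 1 := by
        rw [hFdef u, S1.tsum_eq_zero_add, h0u]; ring
      have e2 : ∑' k : ℕ, ((a (k+1) : ℝ):ℂ) * ((q:ℂ)^2*u)^(k+1) = F ((q:ℂ)^2*u) - 1 := by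
        rw [hFdef ((q:ℂ)^2*u), S2.tsum_eq_zero_add, h0w]; ring
      rw [e1, e2]
    -- C series
    have hCfun : (fun k : ℕ => (q:ℂ)^2*(1-(q:ℂ)^(2*k+2))*((a k : ℝ):ℂ)*u^(k+2))
        = fun k : ℕ => ((q:ℂ)^2*u^2) * (((a k : ℝ):ℂ) * u^k)
          - ((q:ℂ)^4*u^2) * (((a k : ℝ):ℂ) * ((q:ℂ)^2*u)^k) := by
      funext k; ring
    have SC : Summable (fun k : ℕ => (q:ℂ)^2*(1-(q:ℂ)^(2*k+2))*((a k : ℝ):ℂ)*u^(k+2)) := by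
      rw [hCfun]; exact (S1.mul_left _).sub (S2.mul_left _)
    have TC : ∑' k : ℕ, (q:ℂ)^2*(1-(q:ℂ)^(2*k+2))*((a k : ℝ):ℂ)*u^(k+2)
        = (q:ℂ)^2*u^2 * F u - (q:ℂ)^4*u^2 * F ((q:ℂ)^2*u) := by
      rw [hCfun, (S1.mul_left _).tsum_sub (S2.mul_left _), tsum_mul_left, tsum_mul_left,
        hFdef u, hFdef ((q:ℂ)^2*u)]
    -- pointwise recurrence
    have hpt : ∀ k : ℕ, 2*(q:ℂ)*(1-(q:ℂ)^(2*(k+1)+1))*((a (k+1) : ℝ):ℂ)*u^(k+1+1)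
        = (1-(q:ℂ)^(2*(k+1)+2))*((a (k+1+1) : ℝ):ℂ)*u^(k+1+1)
          + (q:ℂ)^2*(1-(q:ℂ)^(2*k+2))*((a k : ℝ):ℂ)*u^(k+2) := by
      intro k
      have hr := key (k+1) (by omega)
      simp only [Nat.add_sub_cancel] at hr
      have hrc : 2*(q:ℂ)*(1-(q:ℂ)^(2*(k+1)+1))*((a (k+1) : ℝ):ℂ)
          = (1-(q:ℂ)^(2*(k+1)+2))*((a (k+1+1) : ℝ):ℂ)
            + (q:ℂ)^2*(1-(q:ℂ)^(2*(k+1)))*((a k : ℝ):ℂ) := by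
        exact_mod_cast congrArg (fun x : ℝ => (x:ℂ)) hr
      linear_combination u^(k+2) * hrc
    have hpt0 : 2*(q:ℂ)*(1-(q:ℂ)^(2*0+1))*((a 0 : ℝ):ℂ)*u^(0+1)
        = (1-(q:ℂ)^(2*0+2))*((a (0+1) : ℝ):ℂ)*u^(0+1) := by
      have hrc : 2*(q:ℂ)*(1-(q:ℂ)) = (1-(q:ℂ)^2)*((a 1 : ℝ):ℂ) := by
        exact_mod_cast congrArg (fun x : ℝ => (x:ℂ)) key0
      rw [show ((a 0 : ℝ):ℂ) = 1 by rw [ha0]; simp]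
      linear_combination u * hrc
    -- master identity
    have hsplit : ∑' k : ℕ, 2*(q:ℂ)*(1-(q:ℂ)^(2*k+1))*((a k : ℝ):ℂ)*u^(k+1)
        = (∑' k : ℕ, (1-(q:ℂ)^(2*k+2))*((a (k+1) : ℝ):ℂ)*u^(k+1))
          + ∑' k : ℕ, (q:ℂ)^2*(1-(q:ℂ)^(2*k+2))*((a k : ℝ):ℂ)*u^(k+2) := by
      rw [SA.tsum_eq_zero_add, SB.tsum_eq_zero_add]
      have e3 : ∑' k : ℕ, 2*(q:ℂ)*(1-(q:ℂ)^(2*(k+1)+1))*((a (k+1) : ℝ):ℂ)*u^(k+1+1)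
          = (∑' k : ℕ, (1-(q:ℂ)^(2*(k+1)+2))*((a (k+1+1) : ℝ):ℂ)*u^(k+1+1))
            + ∑' k : ℕ, (q:ℂ)^2*(1-(q:ℂ)^(2*k+2))*((a k : ℝ):ℂ)*u^(k+2) := by
        rw [← Summable.tsum_add ((summable_nat_add_iff
          (f := fun k : ℕ => (1-(q:ℂ)^(2*k+2))*((a (k+1) : ℝ):ℂ)*u^(k+1)) 1).2 SB) SC]
        exact tsum_congr hpt
      rw [e3, hpt0]
      ring
    have hE : 2*(q:ℂ)*u * F u - 2*(q:ℂ)^2*u * F ((q:ℂ)^2*u)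
        = ((F u - 1) - (F ((q:ℂ)^2*u) - 1))
          + ((q:ℂ)^2*u^2 * F u - (q:ℂ)^4*u^2 * F ((q:ℂ)^2*u)) := by
      rw [← TA, ← TB, ← TC]; exact hsplit
    linear_combination -hE
  -- now fix z
  intro z hz
  have hden : ∀ n : ℕ, (1 - (q:ℂ)^(2*n+1)*z) ≠ 0 := by
    intro n h
    have h1 : ‖(q:ℂ)^(2*n+1)*z‖ = 1 := by
      rw [show (q:ℂ)^(2*n+1)*z = 1 by linear_combination -h, norm_one]
    rw [norm_mul, norm_pow, hnq] at h1
    have h2 : q^(2*n+1) * ‖z‖ < 1 := by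
      calc q^(2*n+1) * ‖z‖ ≤ q^1 * ‖z‖ :=
            mul_le_mul_of_nonneg_right
              (pow_le_pow_of_le_one hq0.le hq1.le (by omega)) (norm_nonneg z)
        _ = q * ‖z‖ := by ring
        _ < q * (1/q) := by exact mul_lt_mul_of_pos_left hz hq0
        _ = 1 := by field_simp
    linarith
  have hnum : ∀ n : ℕ, (1 - (q:ℂ)^(2*n+2)*z) ≠ 0 := by
    intro n h
    have h1 : ‖(q:ℂ)^(2*n+2)*z‖ = 1 := by
      rw [show (q:ℂ)^(2*n+2)*z = 1 by linear_combination -h, norm_one]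
    rw [norm_mul, norm_pow, hnq] at h1
    have h2 : q^(2*n+2) * ‖z‖ < 1 := by
      calc q^(2*n+2) * ‖z‖ ≤ q^1 * ‖z‖ :=
            mul_le_mul_of_nonneg_right
              (pow_le_pow_of_le_one hq0.le hq1.le (by omega)) (norm_nonneg z)
        _ = q * ‖z‖ := by ring
        _ < q * (1/q) := by exact mul_lt_mul_of_pos_left hz hq0
        _ = 1 := by field_simp
    linarith
  -- iteration
  have hiter : ∀ n : ℕ, F z
      = (∏ j ∈ Finset.range n, ((1-(q:ℂ)^(2*j+2)*z)/(1-(q:ℂ)^(2*j+1)*z))^2)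
        * F ((q:ℂ)^(2*n)*z) := by
    intro n
    induction n with
    | zero => simp
    | succ n ih =>
      have hun : ‖(q:ℂ)^(2*n)*z‖ < 1/q := by
        rw [norm_mul, norm_pow, hnq]
        calc q^(2*n) * ‖z‖ ≤ 1 * ‖z‖ :=
              mul_le_mul_of_nonneg_right (pow_le_one₀ hq0.le hq1.le) (norm_nonneg z)
          _ = ‖z‖ := one_mul _
          _ < 1/q := hz
      have hstep := heqgen ((q:ℂ)^(2*n)*z) hun
      rw [show (q:ℂ)^2*((q:ℂ)^(2*n)*z) = (q:ℂ)^(2*(n+1))*z by ring] at hstep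
      have hF' : F ((q:ℂ)^(2*n)*z)
          = ((1-(q:ℂ)^(2*n+2)*z)/(1-(q:ℂ)^(2*n+1)*z))^2 * F ((q:ℂ)^(2*(n+1))*z) := by
        rw [div_pow, div_mul_eq_mul_div, eq_div_iff (pow_ne_zero 2 (hden n))]
        linear_combination hstep
      rw [Finset.prod_range_succ, ih, hF']
      ring
  -- the limit of F along q^(2n) z
  have hlim : Filter.Tendsto (fun n : ℕ => F ((q:ℂ)^(2*n)*z)) Filter.atTop (nhds 1) := by
    have hrz : q * ‖z‖ < 1 := by
      rw [lt_div_iff₀ hq0] at hz; linarith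
    have Smaj : Summable (fun k : ℕ => C*q*((k:ℝ)+2)*(q*‖z‖)^k) :=
      summable_aux2 (C*q) (q*‖z‖) (by positivity) hrz
    have Smaj' : Summable (fun k : ℕ => C*((k:ℝ)+2)*q^(k+1)*‖z‖^k) := by
      apply Smaj.congr
      intro k
      rw [mul_pow]
      ring
    have hFm1 : ∀ w : ℂ, ‖w‖ ≤ ‖z‖ → ‖w‖ < 1/q →
        ‖F w - 1‖ ≤ (∑' k : ℕ, C*((k:ℝ)+2)*q^(k+1)*‖z‖^k) * ‖w‖ := by
      intro w hwz hw
      have Sw := hsum w hw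
      have h0w' : ((a 0 : ℝ):ℂ) * w ^ 0 = 1 := by rw [ha0]; simp
      have e : F w - 1 = ∑' k : ℕ, ((a (k+1) : ℝ):ℂ) * w^(k+1) := by
        rw [hFdef w, Sw.tsum_eq_zero_add, h0w']; ring
      have hterm : ∀ k : ℕ, ‖((a (k+1) : ℝ):ℂ) * w^(k+1)‖
          ≤ C*((k:ℝ)+2)*q^(k+1)*‖z‖^k * ‖w‖ := by
        intro k
        rw [norm_mul, Complex.norm_real, Real.norm_eq_abs, norm_pow]
        have h1 : |a (k+1)| ≤ C * ((k:ℝ)+2) * q^(k+1) := by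
          have := hC (k+1)
          push_cast at this
          calc |a (k+1)| ≤ C * ((k:ℝ)+1+1) * q^(k+1) := this
            _ = C * ((k:ℝ)+2) * q^(k+1) := by ring
        have h2 : ‖w‖^(k+1) ≤ ‖z‖^k * ‖w‖ := by
          rw [pow_succ]
          exact mul_le_mul_of_nonneg_right
            (pow_le_pow_left₀ (norm_nonneg w) hwz k) (norm_nonneg w)
        calc |a (k+1)| * ‖w‖^(k+1) ≤ (C * ((k:ℝ)+2) * q^(k+1)) * (‖z‖^k * ‖w‖) := by
              apply mul_le_mul h1 h2 (by positivity) (by positivity)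
          _ = C*((k:ℝ)+2)*q^(k+1)*‖z‖^k * ‖w‖ := by ring
      have Snorm : Summable (fun k : ℕ => ‖((a (k+1) : ℝ):ℂ) * w^(k+1)‖) :=
        Summable.of_nonneg_of_le (fun k => norm_nonneg _) hterm (Smaj'.mul_right ‖w‖)
      rw [e]
      refine le_trans (norm_tsum_le_tsum_norm Snorm) ?_
      calc ∑' k : ℕ, ‖((a (k+1) : ℝ):ℂ) * w^(k+1)‖
          ≤ ∑' k : ℕ, C*((k:ℝ)+2)*q^(k+1)*‖z‖^k * ‖w‖ :=
            Snorm.tsum_le_tsum hterm (Smaj'.mul_right ‖w‖)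
        _ = (∑' k : ℕ, C*((k:ℝ)+2)*q^(k+1)*‖z‖^k) * ‖w‖ := tsum_mul_right
    rw [tendsto_iff_norm_sub_tendsto_zero]
    have hg : Filter.Tendsto
        (fun n : ℕ => ((∑' k : ℕ, C*((k:ℝ)+2)*q^(k+1)*‖z‖^k) * ‖z‖) * (q^2)^n)
        Filter.atTop (nhds 0) := by
      have := (tendsto_pow_atTop_nhds_zero_of_lt_one (by positivity : (0:ℝ) ≤ q^2) hq2).const_mul
        ((∑' k : ℕ, C*((k:ℝ)+2)*q^(k+1)*‖z‖^k) * ‖z‖)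
      simpa using this
    apply squeeze_zero (fun n => norm_nonneg _) ?_ hg
    intro n
    have hnz : ‖(q:ℂ)^(2*n)*z‖ = q^(2*n) * ‖z‖ := by rw [norm_mul, norm_pow, hnq]
    have hle : ‖(q:ℂ)^(2*n)*z‖ ≤ ‖z‖ := by
      rw [hnz]
      calc q^(2*n) * ‖z‖ ≤ 1 * ‖z‖ :=
            mul_le_mul_of_nonneg_right (pow_le_one₀ hq0.le hq1.le) (norm_nonneg z)
        _ = ‖z‖ := one_mul _
    have hlt : ‖(q:ℂ)^(2*n)*z‖ < 1/q := lt_of_le_of_lt hle hz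
    refine le_trans (hFm1 _ hle hlt) ?_
    rw [hnz, pow_mul]
    have hD0 : 0 ≤ ∑' k : ℕ, C*((k:ℝ)+2)*q^(k+1)*‖z‖^k :=
      tsum_nonneg (fun k => by positivity)
    calc (∑' k : ℕ, C*((k:ℝ)+2)*q^(k+1)*‖z‖^k) * ((q^2)^n * ‖z‖)
        = ((∑' k : ℕ, C*((k:ℝ)+2)*q^(k+1)*‖z‖^k) * ‖z‖) * (q^2)^n := by ring
      _ ≤ _ := le_refl _
  -- multipliability
  have hdelta : (0:ℝ) < 1 - q*‖z‖ := by
    rw [lt_div_iff₀ hq0] at hz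
    nlinarith [norm_nonneg z]
  have hgb : ∀ j : ℕ, ‖((1-(q:ℂ)^(2*j+2)*z)/(1-(q:ℂ)^(2*j+1)*z))^2 - 1‖
      ≤ (q*(1-q)*‖z‖*(2+2*‖z‖)/(1-q*‖z‖)^2) * (q^2)^j := by
    intro j
    have hD := hden j
    have hDnorm : 1 - q*‖z‖ ≤ ‖1-(q:ℂ)^(2*j+1)*z‖ := by
      have h1 := norm_sub_norm_le (1:ℂ) ((q:ℂ)^(2*j+1)*z)
      rw [norm_one, norm_mul, norm_pow, hnq] at h1
      have h2 : q^(2*j+1) * ‖z‖ ≤ q * ‖z‖ := by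
        calc q^(2*j+1) * ‖z‖ ≤ q^1 * ‖z‖ :=
              mul_le_mul_of_nonneg_right
                (pow_le_pow_of_le_one hq0.le hq1.le (by omega)) (norm_nonneg z)
          _ = q * ‖z‖ := by ring
      linarith
    have hkey : ((1-(q:ℂ)^(2*j+2)*z)/(1-(q:ℂ)^(2*j+1)*z))^2 - 1
        = (((q:ℂ)^(2*j+1)-(q:ℂ)^(2*j+2))*z)
          * ((2:ℂ)-((q:ℂ)^(2*j+1)+(q:ℂ)^(2*j+2))*z) / (1-(q:ℂ)^(2*j+1)*z)^2 := by
      rw [div_pow, eq_div_iff (pow_ne_zero 2 hD), sub_mul, div_mul_cancel₀ _ (pow_ne_zero 2 hD)]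
      ring
    rw [hkey, norm_div, norm_mul, norm_pow]
    have hn1 : ‖((q:ℂ)^(2*j+1)-(q:ℂ)^(2*j+2))*z‖ = (q^(2*j+1)-q^(2*j+2)) * ‖z‖ := by
      rw [norm_mul]
      congr 1
      rw [show (q:ℂ)^(2*j+1)-(q:ℂ)^(2*j+2) = ((q^(2*j+1)-q^(2*j+2) : ℝ):ℂ) by push_cast; ring,
        Complex.norm_real, Real.norm_eq_abs, abs_of_nonneg]
      have : q^(2*j+2) ≤ q^(2*j+1) := pow_le_pow_of_le_one hq0.le hq1.le (by omega)
      linarith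
    have hn2 : ‖(2:ℂ)-((q:ℂ)^(2*j+1)+(q:ℂ)^(2*j+2))*z‖ ≤ 2 + 2*‖z‖ := by
      refine le_trans (norm_sub_le _ _) ?_
      rw [norm_mul]
      have h2n : ‖(2:ℂ)‖ = 2 := by norm_num
      have h3 : ‖(q:ℂ)^(2*j+1)+(q:ℂ)^(2*j+2)‖ ≤ 2 := by
        refine le_trans (norm_add_le _ _) ?_
        rw [norm_pow, norm_pow, hnq]
        have p1 : q^(2*j+1) ≤ 1 := pow_le_one₀ hq0.le hq1.le
        have p2 : q^(2*j+2) ≤ 1 := pow_le_one₀ hq0.le hq1.le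
        linarith
      have := mul_le_mul_of_nonneg_right h3 (norm_nonneg z)
      rw [h2n]
      linarith
    have hden2 : (1-q*‖z‖)^2 ≤ ‖1-(q:ℂ)^(2*j+1)*z‖^2 := by
      apply pow_le_pow_left₀ hdelta.le hDnorm
    have hnum_le : ‖((q:ℂ)^(2*j+1)-(q:ℂ)^(2*j+2))*z‖ * ‖(2:ℂ)-((q:ℂ)^(2*j+1)+(q:ℂ)^(2*j+2))*z‖
        ≤ (q*(1-q)*‖z‖*(2+2*‖z‖)) * (q^2)^j := by
      rw [hn1]
      have e1 : (q^(2*j+1)-q^(2*j+2)) * ‖z‖ = (q*(1-q)*‖z‖) * (q^2)^j := by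
        rw [← pow_mul]
        ring
      rw [e1]
      have hq1n' : (0:ℝ) ≤ 1 - q := by linarith
      have hfac : (0:ℝ) ≤ (q*(1-q)*‖z‖) * (q^2)^j :=
        mul_nonneg (mul_nonneg (mul_nonneg hq0.le hq1n') (norm_nonneg z)) (by positivity)
      calc (q*(1-q)*‖z‖) * (q^2)^j * ‖(2:ℂ)-((q:ℂ)^(2*j+1)+(q:ℂ)^(2*j+2))*z‖
          ≤ (q*(1-q)*‖z‖) * (q^2)^j * (2+2*‖z‖) := by
            apply mul_le_mul_of_nonneg_left hn2 hfac
        _ = (q*(1-q)*‖z‖*(2+2*‖z‖)) * (q^2)^j := by ring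
    have hq1n : (0:ℝ) ≤ 1 - q := by linarith
    have hKnn : (0:ℝ) ≤ q*(1-q)*‖z‖*(2+2*‖z‖) :=
      mul_nonneg (mul_nonneg (mul_nonneg hq0.le hq1n) (norm_nonneg z)) (by positivity)
    have hDpos : (0:ℝ) < ‖1-(q:ℂ)^(2*j+1)*z‖^2 :=
      lt_of_lt_of_le (pow_pos hdelta 2) hden2
    rw [div_le_iff₀ hDpos]
    refine le_trans hnum_le ?_
    have hone : (1:ℝ) ≤ ‖1-(q:ℂ)^(2*j+1)*z‖^2 / (1-q*‖z‖)^2 :=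
      (one_le_div (pow_pos hdelta 2)).mpr hden2
    calc (q*(1-q)*‖z‖*(2+2*‖z‖)) * (q^2)^j
        = (q*(1-q)*‖z‖*(2+2*‖z‖)) * (q^2)^j * 1 := (mul_one _).symm
      _ ≤ (q*(1-q)*‖z‖*(2+2*‖z‖)) * (q^2)^j * (‖1-(q:ℂ)^(2*j+1)*z‖^2 / (1-q*‖z‖)^2) := by
          apply mul_le_mul_of_nonneg_left hone (mul_nonneg hKnn (by positivity))
      _ = (q*(1-q)*‖z‖*(2+2*‖z‖)/(1-q*‖z‖)^2) * (q^2)^j * ‖1-(q:ℂ)^(2*j+1)*z‖^2 := by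
          ring
  set K : ℝ := q*(1-q)*‖z‖*(2+2*‖z‖)/(1-q*‖z‖)^2 with hK
  have hK0 : 0 ≤ K := by
    rw [hK]
    have h1 : (0:ℝ) ≤ 1 - q := by linarith
    apply div_nonneg _ (by positivity)
    exact mul_nonneg (mul_nonneg (mul_nonneg hq0.le h1) (norm_nonneg z)) (by positivity)
  have hr0 : ∀ j : ℕ, ((1-(q:ℂ)^(2*j+2)*z)/(1-(q:ℂ)^(2*j+1)*z))^2 ≠ 0 :=
    fun j => pow_ne_zero _ (div_ne_zero (hnum j) (hden j))
  have hev : ∀ᶠ j in Filter.atTop, K * (q^2)^j ≤ 1/2 := by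
    have ht : Filter.Tendsto (fun j : ℕ => K * (q^2)^j) Filter.atTop (nhds 0) := by
      simpa using
        (tendsto_pow_atTop_nhds_zero_of_lt_one (by positivity : (0:ℝ) ≤ q^2) hq2).const_mul K
    have := ht.eventually (eventually_le_nhds (by norm_num : (0:ℝ) < 1/2))
    exact this
  have Slog : Summable (fun j : ℕ => Complex.log
      (((1-(q:ℂ)^(2*j+2)*z)/(1-(q:ℂ)^(2*j+1)*z))^2)) := by
    apply Summable.of_norm_bounded_eventually (g := fun j => 3/2 * (K * (q^2)^j))
    · exact (((summable_geometric_of_lt_one (by positivity) hq2).mul_left K).mul_left (3/2))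
    · rw [Nat.cofinite_eq_atTop]
      filter_upwards [hev] with j hj
      have hb := hgb j
      have hsmall : ‖((1-(q:ℂ)^(2*j+2)*z)/(1-(q:ℂ)^(2*j+1)*z))^2 - 1‖ ≤ 1/2 :=
        le_trans hb hj
      have hrw : ((1-(q:ℂ)^(2*j+2)*z)/(1-(q:ℂ)^(2*j+1)*z))^2
          = 1 + (((1-(q:ℂ)^(2*j+2)*z)/(1-(q:ℂ)^(2*j+1)*z))^2 - 1) := by ring
      rw [hrw]
      refine le_trans (Complex.norm_log_one_add_half_le_self hsmall) ?_
      linarith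
  have hM : Multipliable (fun j : ℕ =>
      ((1-(q:ℂ)^(2*j+2)*z)/(1-(q:ℂ)^(2*j+1)*z))^2) := by
    have := Complex.multipliable_of_summable_log Slog
    exact this
  refine ⟨hM, ?_⟩
  have h1 := hM.hasProd.tendsto_prod_nat
  have h2 := h1.mul hlim
  rw [mul_one] at h2
  have h3 : (fun n : ℕ => (∏ j ∈ Finset.range n,
      ((1-(q:ℂ)^(2*j+2)*z)/(1-(q:ℂ)^(2*j+1)*z))^2) * F ((q:ℂ)^(2*n)*z))
      = fun _ : ℕ => F z := funext fun n => (hiter n).symm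
  rw [h3] at h2
  have h4 : F z = ∏' j : ℕ, ((1-(q:ℂ)^(2*j+2)*z)/(1-(q:ℂ)^(2*j+1)*z))^2 :=
    tendsto_nhds_unique ((tendsto_const_nhds : Filter.Tendsto (fun _ : ℕ => F z) Filter.atTop (nhds (F z)))) h2
  rw [← hFdef z]
  exact h4
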